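/- Let R be a Λ-graded ring (Λ an abelian group) and S ⊆ R a multiplicative set consisting of homogeneous elements which satisfies the left Ore condition and such that the canonical map R → S⁻¹R is injective. Then the Ore localization S⁻¹R carries a unique Λ-grading such that R → S⁻¹R is a graded ring homomorphism, with the degree of s⁻¹r equal to deg(r) − deg(s) for homogeneous r ∈ R, s ∈ S. -/
import Mathlib

open OreLocalization

section OLGAux

variable {Λ R : Type*} [AddCommGroup Λ] [DecidableEq Λ] [Ring R]
  (𝒜 : Λ → AddSubgroup R) [SetLike.GradedMonoid 𝒜] [DirectSum.Decomposition 𝒜]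

/-- The homogeneous projection onto degree `ν`, as an additive monoid hom. -/
noncomputable def OLGpi (ν : Λ) : R →+ R where
  toFun x := (DirectSum.decompose 𝒜 x ν : R)
  map_zero' := by simp
  map_add' x y := by simp [DirectSum.decompose_add]

lemma OLGpi_mem (ν : Λ) (x : R) : OLGpi 𝒜 ν x ∈ 𝒜 ν := SetLike.coe_mem _

lemma OLGpi_of_mem_same {x : R} {ν : Λ} (h : x ∈ 𝒜 ν) : OLGpi 𝒜 ν x = x :=
  DirectSum.decompose_of_mem_same 𝒜 h

lemma OLGpi_of_mem_ne {x : R} {μ ν : Λ} (h : x ∈ 𝒜 μ) (hne : μ ≠ ν) : OLGpi 𝒜 ν x = 0 :=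
  DirectSum.decompose_of_mem_ne 𝒜 h hne

/-- Extracting the relevant homogeneous component from a factorization with a
homogeneous right factor and homogeneous product. -/
lemma OLG_comp_mul {a s b : R} {μ ν : Λ} (hs : s ∈ 𝒜 μ) (hb : b ∈ 𝒜 ν)
    (h : a * s = b) : OLGpi 𝒜 (ν - μ) a * s = b := by
  classical
  have ha : (∑ k ∈ (DirectSum.decompose 𝒜 a).support, (DirectSum.decompose 𝒜 a k : R)) = a :=
    DirectSum.sum_support_decompose 𝒜 a
  have hb' : (∑ k ∈ (DirectSum.decompose 𝒜 a).support,
      (DirectSum.decompose 𝒜 a k : R) * s) = b := by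
    rw [← Finset.sum_mul, ha, h]
  have h2 := congrArg (OLGpi 𝒜 ν) hb'
  rw [map_sum, OLGpi_of_mem_same 𝒜 hb] at h2
  have h3 : ∀ k ∈ (DirectSum.decompose 𝒜 a).support,
      OLGpi 𝒜 ν ((DirectSum.decompose 𝒜 a k : R) * s)
        = if k = ν - μ then (DirectSum.decompose 𝒜 a k : R) * s else 0 := by
    intro k _
    have hmem : (DirectSum.decompose 𝒜 a k : R) * s ∈ 𝒜 (k + μ) :=
      SetLike.mul_mem_graded (SetLike.coe_mem _) hs
    by_cases hk : k = ν - μ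
    · rw [if_pos hk]
      subst hk
      exact OLGpi_of_mem_same 𝒜 (by rwa [sub_add_cancel] at hmem)
    · rw [if_neg hk]
      exact OLGpi_of_mem_ne 𝒜 hmem (fun hc => hk (eq_sub_of_add_eq hc))
  rw [Finset.sum_congr rfl h3, Finset.sum_ite_eq' _ (ν - μ) _] at h2
  by_cases hmem : ν - μ ∈ (DirectSum.decompose 𝒜 a).support
  · rw [if_pos hmem] at h2
    exact h2
  · rw [if_neg hmem] at h2
    have hz : (DirectSum.decompose 𝒜 a (ν - μ) : R) = 0 := by
      rw [DFinsupp.notMem_support_iff] at hmem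
      rw [hmem]; rfl
    show (DirectSum.decompose 𝒜 a (ν - μ) : R) * s = b
    rw [hz, zero_mul]
    exact h2

variable (S : Submonoid R) [OreLocalization.OreSet S]

/-- Homogeneous version of the left Ore condition for two denominators. -/
lemma OLG_hom_ore (hhom : ∀ s : S, ∃ lam : Λ, (s : R) ∈ 𝒜 lam)
    {μ μ' : Λ} (s s' : S) (hs : (s : R) ∈ 𝒜 μ) (hs' : (s' : R) ∈ 𝒜 μ') :
    ∃ (u : S) (v : R) (ν : Λ), (u : R) ∈ 𝒜 ν ∧ v ∈ 𝒜 (ν + μ - μ') ∧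
      (u : R) * s = v * s' := by
  obtain ⟨ν, hu⟩ := hhom (oreDenom (s : R) s')
  have hb : (oreDenom (s : R) s' : R) * s ∈ 𝒜 (ν + μ) := SetLike.mul_mem_graded hu hs
  have hcm := OLG_comp_mul 𝒜 (a := oreNum (s : R) s') hs' hb (ore_eq (s : R) s').symm
  exact ⟨oreDenom (s : R) s', OLGpi 𝒜 (ν + μ - μ') (oreNum (s : R) s'), ν, hu,
    OLGpi_mem 𝒜 _ _, hcm.symm⟩

/-- The candidate grading on the Ore localization. -/
def OLGgr (hhom : ∀ s : S, ∃ lam : Λ, (s : R) ∈ 𝒜 lam) (lam : Λ) :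
    AddSubgroup (R[S⁻¹]) where
  carrier := {x | ∃ (r : R) (s : S) (μ : Λ), r ∈ 𝒜 (lam + μ) ∧ (s : R) ∈ 𝒜 μ ∧ x = r /ₒ s}
  zero_mem' := ⟨0, 1, 0, zero_mem _, SetLike.one_mem_graded 𝒜, (zero_oreDiv' _).symm⟩
  neg_mem' := by
    rintro x ⟨r, s, μ, hr, hs, rfl⟩
    exact ⟨-r, s, μ, neg_mem hr, hs, OreLocalization.neg_def r s⟩
  add_mem' := by
    rintro x y ⟨r, s, μ, hr, hs, rfl⟩ ⟨r', s', μ', hr', hs', rfl⟩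
    obtain ⟨u, v, ν, hu, hv, huv⟩ := OLG_hom_ore 𝒜 S hhom s s' hs hs'
    refine ⟨(u : R) * r + v * r', u * s, ν + μ, ?_, SetLike.mul_mem_graded hu hs, ?_⟩
    · apply add_mem
      · have h := SetLike.mul_mem_graded hu hr
        have e : ν + (lam + μ) = lam + (ν + μ) := by abel
        rwa [e] at h
      · have h := SetLike.mul_mem_graded hv hr'
        have e : ν + μ - μ' + (lam + μ') = lam + (ν + μ) := by abel
        rwa [e] at h
    · rw [oreDiv_add_char s s' v u huv]
      simp [Submonoid.smul_def, smul_eq_mul]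

variable {S}

lemma OLGgr_mul (hhom : ∀ s : S, ∃ lam : Λ, (s : R) ∈ 𝒜 lam) {lam mu : Λ}
    {x y : R[S⁻¹]} (hx : x ∈ OLGgr 𝒜 S hhom lam) (hy : y ∈ OLGgr 𝒜 S hhom mu) :
    x * y ∈ OLGgr 𝒜 S hhom (lam + mu) := by
  obtain ⟨r, s, μ, hr, hs, rfl⟩ := hx
  obtain ⟨r', s', μ', hr', hs', rfl⟩ := hy
  obtain ⟨ν, hu⟩ := hhom (oreDenom r s')
  have hb : (oreDenom r s' : R) * r ∈ 𝒜 (ν + (lam + μ)) := SetLike.mul_mem_graded hu hr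
  have hvs := OLG_comp_mul 𝒜 (a := oreNum r s') hs' hb (ore_eq r s').symm
  refine ⟨OLGpi 𝒜 (ν + (lam + μ) - μ') (oreNum r s') * r', oreDenom r s' * s, ν + μ, ?_,
    SetLike.mul_mem_graded hu hs, ?_⟩
  · have h := SetLike.mul_mem_graded (OLGpi_mem 𝒜 (ν + (lam + μ) - μ') (oreNum r s')) hr'
    have e : ν + (lam + μ) - μ' + (mu + μ') = lam + mu + (ν + μ) := by abel
    rwa [e] at h
  · rw [oreDiv_mul_char r r' s s' _ _ hvs.symm]

variable (S)

/-- Dividing by a fixed denominator, as an additive monoid hom. -/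
def OLGdiv (s : S) : R →+ R[S⁻¹] where
  toFun r := r /ₒ s
  map_zero' := zero_oreDiv' s
  map_add' _ _ := add_oreDiv.symm

lemma OLG_eq_zero (hinj : Function.Injective (fun r : R => r /ₒ (1 : S)))
    {r : R} {s : S} (h : r /ₒ s = 0) : r = 0 := by
  have h' : (0 : R) /ₒ (1 : S) = r /ₒ s := by rw [h, zero_oreDiv']
  obtain ⟨u, v, h₁, h₂⟩ := oreDiv_eq_iff.mp h'
  have hur : (u : R) * r = 0 := by
    simpa [Submonoid.smul_def, smul_eq_mul] using h₁
  have hmem : (u : R) * ((1 : S) : R) ∈ S := by simpa using u.2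
  have hcalc : r /ₒ (1 : S) = (0 : R) /ₒ (1 : S) := by
    rw [OreLocalization.expand r 1 (u : R) hmem]
    have : (u : R) • r = 0 := by simpa [smul_eq_mul] using hur
    rw [this, zero_oreDiv', zero_oreDiv']
  exact hinj hcalc

/-- Common homogeneous denominator for a finite family of homogeneous fractions. -/
lemma OLG_cd (hhom : ∀ s : S, ∃ lam : Λ, (s : R) ∈ 𝒜 lam) (F : Finset Λ)
    (y : Λ → R[S⁻¹]) (hy : ∀ μ ∈ F, y μ ∈ OLGgr 𝒜 S hhom μ) :
    ∃ (s : S) (ν : Λ) (r : Λ → R), (s : R) ∈ 𝒜 ν ∧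
      ∀ μ ∈ F, r μ ∈ 𝒜 (μ + ν) ∧ y μ = r μ /ₒ s := by
  classical
  induction F using Finset.induction_on with
  | empty => exact ⟨1, 0, fun _ => 0, SetLike.one_mem_graded 𝒜, by simp⟩
  | @insert a F ha ih =>
    obtain ⟨s, ν, r, hsν, hr⟩ := ih (fun μ hμ => hy μ (Finset.mem_insert_of_mem hμ))
    obtain ⟨ra, sa, d, hra, hsa, hya⟩ := hy a (Finset.mem_insert_self a F)
    obtain ⟨u, v, ν₁, hu, hv, huv⟩ := OLG_hom_ore 𝒜 S hhom sa s hsa hsν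
    refine ⟨u * sa, ν₁ + d, fun μ => if μ = a then (u : R) * ra else v * r μ,
      SetLike.mul_mem_graded hu hsa, ?_⟩
    intro μ hμ
    dsimp only
    rcases Finset.mem_insert.mp hμ with rfl | hμF
    · rw [if_pos rfl]
      constructor
      · have h := SetLike.mul_mem_graded hu hra
        have e : ν₁ + (μ + d) = μ + (ν₁ + d) := by abel
        rwa [e] at h
      · rw [hya, OreLocalization.expand' ra sa u]
        simp [Submonoid.smul_def, smul_eq_mul]
    · have hne : μ ≠ a := by rintro rfl; exact ha hμF
      rw [if_neg hne]
      obtain ⟨hrμ, hyμ⟩ := hr μ hμF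
      constructor
      · have h := SetLike.mul_mem_graded hv hrμ
        have e : ν₁ + d - ν + (μ + ν) = μ + (ν₁ + d) := by abel
        rwa [e] at h
      · have hst : v * (s : R) ∈ S := by
          rw [← huv]; exact mul_mem u.2 sa.2
        have hS : (⟨v * (s : R), hst⟩ : S) = u * sa := by
          apply Subtype.ext
          simp [← huv]
        rw [hyμ, OreLocalization.expand (r μ) s v hst, hS, smul_eq_mul]

lemma OLG_sum_comp (F : Finset Λ) (ν : Λ) (r : Λ → R) (hr : ∀ μ ∈ F, r μ ∈ 𝒜 (μ + ν))
    (h0 : ∑ μ ∈ F, r μ = 0) {μ₀ : Λ} (hμ₀ : μ₀ ∈ F) : r μ₀ = 0 := by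
  have h1 := congrArg (OLGpi 𝒜 (μ₀ + ν)) h0
  rw [map_sum, map_zero] at h1
  rw [Finset.sum_eq_single_of_mem μ₀ hμ₀ (fun μ hμ hne =>
    OLGpi_of_mem_ne 𝒜 (hr μ hμ) (fun hc => hne (add_right_cancel hc)))] at h1
  rwa [OLGpi_of_mem_same 𝒜 (hr μ₀ hμ₀)] at h1

/-- Any element of a supremum of additive subgroups is a finite sum of members. -/
lemma OLG_exists_finsupp {M ι : Type*} [AddCommGroup M] (p : ι → AddSubgroup M) {x : M}
    (hx : x ∈ ⨆ i, p i) :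
    ∃ f : ι →₀ M, (∀ i, f i ∈ p i) ∧ x = ∑ i ∈ f.support, f i := by
  classical
  refine AddSubgroup.iSup_induction p (C := fun z =>
    ∃ f : ι →₀ M, (∀ i, f i ∈ p i) ∧ z = ∑ i ∈ f.support, f i) hx ?_ ?_ ?_
  · intro i x hx
    refine ⟨Finsupp.single i x, ?_, ?_⟩
    · intro j
      rw [Finsupp.single_apply]
      split
      · next h => exact h ▸ hx
      · exact zero_mem _
    · exact (Finsupp.sum_single_index (h := fun _ (m : M) => m) rfl).symm
  · exact ⟨0, fun i => zero_mem _, by simp⟩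
  · rintro a b ⟨f, hf, rfl⟩ ⟨g, hg, rfl⟩
    exact ⟨f + g, fun i => by rw [Finsupp.add_apply]; exact add_mem (hf i) (hg i),
      (Finsupp.sum_add_index' (h := fun _ (m : M) => m) (fun _ => rfl) (fun _ _ _ => rfl)).symm⟩

end OLGAux

/-- Let `R` be a `Λ`-graded ring (`Λ` an abelian group) and `S ⊆ R` a multiplicative set
of homogeneous elements satisfying the (left) Ore condition and such that `R → S⁻¹R` is
injective.  Then the Ore localization `S⁻¹R` carries a unique `Λ`-grading (a family of
additive subgroups which is independent, exhaustive and multiplicative) such that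
`R → S⁻¹R` is a graded ring homomorphism and the degree of the fraction `r /ₒ s` is
`deg r − deg s` for homogeneous `r ∈ R`, `s ∈ S`. -/
theorem ore_localization_graded
    (Λ R : Type*) [AddCommGroup Λ] [DecidableEq Λ] [Ring R]
    (𝒜 : Λ → AddSubgroup R) [SetLike.GradedMonoid 𝒜] [DirectSum.Decomposition 𝒜]
    (S : Submonoid R) [OreLocalization.OreSet S]
    (hhom : ∀ s : S, ∃ lam : Λ, (s : R) ∈ 𝒜 lam)
    (hinj : Function.Injective (fun r : R => r /ₒ (1 : S))) :
    ∃! ℬ : Λ → AddSubgroup (R[S⁻¹]),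
      iSupIndep ℬ ∧
      (⨆ lam : Λ, ℬ lam) = ⊤ ∧
      (1 : R[S⁻¹]) ∈ ℬ 0 ∧
      (∀ (lam mu : Λ) (x y : R[S⁻¹]), x ∈ ℬ lam → y ∈ ℬ mu → x * y ∈ ℬ (lam + mu)) ∧
      (∀ (lam : Λ) (r : R), r ∈ 𝒜 lam → (r /ₒ (1 : S)) ∈ ℬ lam) ∧
      (∀ (lam mu : Λ) (r : R) (s : S), r ∈ 𝒜 lam → (s : R) ∈ 𝒜 mu →
        (r /ₒ s) ∈ ℬ (lam - mu)) := by
  classical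
  set ℬ : Λ → AddSubgroup (R[S⁻¹]) := OLGgr 𝒜 S hhom with hBdef
  have hmap : ∀ (lam : Λ) (r : R), r ∈ 𝒜 lam → (r /ₒ (1 : S)) ∈ ℬ lam := by
    intro lam r hr
    exact ⟨r, 1, 0, by rwa [add_zero], SetLike.one_mem_graded 𝒜, rfl⟩
  have hfrac : ∀ (lam mu : Λ) (r : R) (s : S), r ∈ 𝒜 lam → (s : R) ∈ 𝒜 mu →
      (r /ₒ s) ∈ ℬ (lam - mu) := by
    intro lam mu r s hr hs
    exact ⟨r, s, mu, by rwa [sub_add_cancel], hs, rfl⟩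
  have hsup : (⨆ lam : Λ, ℬ lam) = ⊤ := by
    rw [eq_top_iff]
    rintro x -
    induction x with
    | _ r s =>
      obtain ⟨μ, hsμ⟩ := hhom s
      have hre : r /ₒ s = ∑ k ∈ (DirectSum.decompose 𝒜 r).support,
          ((DirectSum.decompose 𝒜 r k : R) /ₒ s) := by
        conv_lhs => rw [← DirectSum.sum_support_decompose 𝒜 r]
        exact map_sum (OLGdiv S s) _ _
      rw [hre]
      refine AddSubgroup.sum_mem _ (fun k _ => ?_)
      exact le_iSup ℬ (k - μ) (hfrac k μ _ s (SetLike.coe_mem _) hsμ)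
  have h1 : (1 : R[S⁻¹]) ∈ ℬ 0 := by
    rw [OreLocalization.one_def]
    exact ⟨1, 1, 0, by rw [add_zero]; exact SetLike.one_mem_graded 𝒜,
      SetLike.one_mem_graded 𝒜, rfl⟩
  have hmul : ∀ (lam mu : Λ) (x y : R[S⁻¹]), x ∈ ℬ lam → y ∈ ℬ mu →
      x * y ∈ ℬ (lam + mu) := fun lam mu x y hx hy => OLGgr_mul 𝒜 hhom hx hy
  have hind : iSupIndep ℬ := by
    rw [iSupIndep_def]
    intro i
    rw [AddSubgroup.disjoint_def]
    intro x hxi hxsup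
    have hxsup' : x ∈ ⨆ j : {j : Λ // j ≠ i}, ℬ j := by
      rwa [iSup_subtype'] at hxsup
    obtain ⟨f, hf, hx⟩ := OLG_exists_finsupp _ hxsup'
    set F₀ : Finset Λ := f.support.image Subtype.val with hF₀
    have hiF₀ : i ∉ F₀ := by
      intro hi
      obtain ⟨k, _, hk⟩ := Finset.mem_image.mp hi
      exact k.2 hk
    set y : Λ → R[S⁻¹] := fun μ => if h : μ = i then -x else f ⟨μ, h⟩ with hy
    have hymem : ∀ μ ∈ insert i F₀, y μ ∈ ℬ μ := by
      intro μ hμ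
      by_cases h : μ = i
      · subst h
        simp only [hy, dif_pos rfl]
        exact neg_mem hxi
      · simp only [hy, dif_neg h]
        exact hf ⟨μ, h⟩
    obtain ⟨s, ν, r, hsν, hr⟩ := OLG_cd 𝒜 S hhom (insert i F₀) y hymem
    have hsum : ∑ μ ∈ insert i F₀, y μ = 0 := by
      rw [Finset.sum_insert hiF₀]
      have hxs : ∑ μ ∈ F₀, y μ = x := by
        rw [hF₀, Finset.sum_image (fun a _ b _ hab => Subtype.ext hab)]
        rw [hx]
        refine Finset.sum_congr rfl (fun k _ => ?_)
        simp only [hy, dif_neg k.2]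
      rw [hxs]
      simp [hy]
    have hzero : (∑ μ ∈ insert i F₀, r μ) /ₒ s = 0 := by
      calc (∑ μ ∈ insert i F₀, r μ) /ₒ s
          = ∑ μ ∈ insert i F₀, (r μ /ₒ s) := map_sum (OLGdiv S s) _ _
        _ = ∑ μ ∈ insert i F₀, y μ :=
            Finset.sum_congr rfl (fun μ hμ => ((hr μ hμ).2).symm)
        _ = 0 := hsum
    have hr0 : ∑ μ ∈ insert i F₀, r μ = 0 := OLG_eq_zero S hinj hzero
    have hri : r i = 0 := OLG_sum_comp 𝒜 (insert i F₀) ν r (fun μ hμ => (hr μ hμ).1) hr0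
      (Finset.mem_insert_self i F₀)
    have hyi : y i = 0 := by
      rw [(hr i (Finset.mem_insert_self i F₀)).2, hri, zero_oreDiv']
    have : -x = 0 := by simpa [hy] using hyi
    simpa using this
  refine ⟨ℬ, ⟨hind, hsup, h1, hmul, hmap, hfrac⟩, ?_⟩
  rintro ℬ' ⟨hind', hsup', h1', hmul', hmap', hfrac'⟩
  funext lam
  have hle : ∀ μ : Λ, ℬ μ ≤ ℬ' μ := by
    rintro μ x ⟨r, s, d, hr, hs, rfl⟩
    have h := hfrac' (μ + d) d r s hr hs
    rwa [add_sub_cancel_right] at h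
  refine le_antisymm ?_ (hle lam)
  intro x hx
  have hxtop : x ∈ ⨆ μ, ℬ μ := by rw [hsup]; exact AddSubgroup.mem_top x
  obtain ⟨f, hf, hxf⟩ := OLG_exists_finsupp ℬ hxtop
  have hz : x - f lam ∈ ℬ' lam := sub_mem hx (hle lam (hf lam))
  have hrep : x - f lam = ∑ μ ∈ f.support.erase lam, f μ := by
    by_cases h : lam ∈ f.support
    · rw [hxf, ← Finset.add_sum_erase _ _ h]
      abel
    · rw [Finset.erase_eq_of_notMem h, Finsupp.notMem_support_iff.mp h, sub_zero, hxf]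
  have hz2 : x - f lam ∈ ⨆ j, ⨆ (_ : j ≠ lam), ℬ' j := by
    rw [hrep]
    refine AddSubgroup.sum_mem _ (fun μ hμ => ?_)
    exact le_iSup₂ (f := fun j (_ : j ≠ lam) => ℬ' j) μ (Finset.ne_of_mem_erase hμ)
      (hle μ (hf μ))
  have hx0 : x - f lam = 0 :=
    AddSubgroup.disjoint_def.mp ((iSupIndep_def.mp hind') lam) hz hz2
  have hxe : x = f lam := by
    have := sub_eq_zero.mp hx0
    exact this
  rw [hxe]
  exact hf lam
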